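/- Let R > 0 and m > 0. If m = 2R³ then the equation (R²−α²)α/(R²+α²)² = ∛m/(4·∛2·R²) has exactly one solution α = (√2−1)R in (0,R); if m > 2R³ the equation has no solution in (0,R). -/

import Mathlib

theorem two_body_critical_and_supercritical (R m : ℝ) (hR : 0 < R) (hm : 0 < m) :
    (m = 2 * R ^ 3 →
      ∀ α ∈ Set.Ioo (0 : ℝ) R,
        ((R ^ 2 - α ^ 2) * α / (R ^ 2 + α ^ 2) ^ 2 =
            m ^ ((1 : ℝ) / 3) / (4 * (2 : ℝ) ^ ((1 : ℝ) / 3) * R ^ 2) ↔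
          α = (Real.sqrt 2 - 1) * R)) ∧
    (m > 2 * R ^ 3 →
      ∀ α ∈ Set.Ioo (0 : ℝ) R,
        (R ^ 2 - α ^ 2) * α / (R ^ 2 + α ^ 2) ^ 2 ≠
          m ^ ((1 : ℝ) / 3) / (4 * (2 : ℝ) ^ ((1 : ℝ) / 3) * R ^ 2)) := by
  have h2pos : (0:ℝ) < (2:ℝ) ^ ((1:ℝ)/3) := Real.rpow_pos_of_pos (by norm_num) _
  have hcube : ((2:ℝ) * R ^ 3) ^ ((1:ℝ)/3) = 2 ^ ((1:ℝ)/3) * R := by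
    rw [Real.mul_rpow (by norm_num) (by positivity)]
    congr 1
    rw [← Real.rpow_natCast R 3, ← Real.rpow_mul hR.le]
    norm_num
  have hrhs : (2 ^ ((1:ℝ)/3) * R) / (4 * (2:ℝ) ^ ((1:ℝ)/3) * R ^ 2) = 1 / (4 * R) := by
    field_simp
  have hsq2 : Real.sqrt 2 ^ 2 = 2 := Real.sq_sqrt (by norm_num)
  constructor
  · intro hmeq α ⟨hα0, hαR⟩
    rw [hmeq, hcube, hrhs]
    have hden : (0:ℝ) < (R ^ 2 + α ^ 2) ^ 2 := by positivity
    rw [div_eq_div_iff hden.ne' (by positivity : ((4:ℝ)*R) ≠ 0)]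
    constructor
    · intro h
      have hz : (α ^ 2 + 2 * R * α - R ^ 2) ^ 2 = 0 := by nlinarith
      have hz' : α ^ 2 + 2 * R * α - R ^ 2 = 0 := by
        exact pow_eq_zero_iff (by norm_num) |>.mp hz
      have h2 : (α + R) ^ 2 = (Real.sqrt 2 * R) ^ 2 := by nlinarith
      have hpos1 : (0:ℝ) ≤ α + R := by linarith
      have hpos2 : (0:ℝ) ≤ Real.sqrt 2 * R := by positivity
      have heq : α + R = Real.sqrt 2 * R := by
        nlinarith [sq_nonneg (α + R - Real.sqrt 2 * R), sq_nonneg (α + R + Real.sqrt 2 * R)]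
      linarith [heq]
    · intro h
      subst h
      linear_combination ((2 - Real.sqrt 2 ^ 2) * R ^ 4) * hsq2
  · intro hmgt α ⟨hα0, hαR⟩
    have hlt : (2 * R ^ 3) ^ ((1:ℝ)/3) < m ^ ((1:ℝ)/3) :=
      Real.rpow_lt_rpow (by positivity) hmgt (by norm_num)
    rw [hcube] at hlt
    have hden : (0:ℝ) < (R ^ 2 + α ^ 2) ^ 2 := by positivity
    have hL : (R ^ 2 - α ^ 2) * α / (R ^ 2 + α ^ 2) ^ 2 ≤ 1 / (4 * R) := by
      rw [div_le_div_iff₀ hden (by positivity)]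
      nlinarith [sq_nonneg (α ^ 2 + 2 * R * α - R ^ 2)]
    have hR2 : (0:ℝ) < R ^ 2 := by positivity
    have hRHS : 1 / (4 * R) < m ^ ((1:ℝ)/3) / (4 * (2:ℝ) ^ ((1:ℝ)/3) * R ^ 2) := by
      rw [← hrhs]
      gcongr
    intro h
    rw [h] at hL
    linarith
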